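/- Let g ∈ SL(V) with Cartan decomposition data X_g^M = ℝ(k_g e₁) ∈ P(V) and Y_g^m = ℝ(ᵗl_g e₁*) ∈ P(V*). Then for every X ∈ P(V), d(gX, X_g^M) · δ(X, Y_g^m) ≤ κ_{1,2}(g), where κ_{1,2}(g) = κ₂(g)/κ₁(g). -/
import Mathlib


noncomputable section

open scoped RealInnerProductSpace

def op {d : ℕ} (g : Matrix (Fin d) (Fin d) ℝ) :
    EuclideanSpace ℝ (Fin d) →L[ℝ] EuclideanSpace ℝ (Fin d) :=
  Matrix.toEuclideanCLM (𝕜 := ℝ) g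

/-- Projective distance `d(ℝx, ℝy) = ‖x ∧ y‖ / (‖x‖‖y‖)`. -/
def projDist {d : ℕ} (x y : EuclideanSpace ℝ (Fin d)) : ℝ :=
  Real.sqrt (‖x‖ ^ 2 * ‖y‖ ^ 2 - ⟪x, y⟫ ^ 2) / (‖x‖ * ‖y‖)

lemma op_apply {d : ℕ} (A : Matrix (Fin d) (Fin d) ℝ) (v : EuclideanSpace ℝ (Fin d))
    (i : Fin d) : op A v i = A.mulVec v i :=
  congrFun (Matrix.ofLp_toEuclideanCLM (𝕜 := ℝ) A v) i

lemma op_unitary {d : ℕ} {u : Matrix (Fin d) (Fin d) ℝ}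
    (hu : u ∈ Matrix.orthogonalGroup (Fin d) ℝ) :
    op u ∈ unitary (EuclideanSpace ℝ (Fin d) →L[ℝ] EuclideanSpace ℝ (Fin d)) := by
  rw [Unitary.mem_iff] at hu ⊢
  constructor
  · rw [show star (op u) = op (star u) from (map_star _ _).symm, show ((op (star u)) * (op u) :
      EuclideanSpace ℝ (Fin d) →L[ℝ] EuclideanSpace ℝ (Fin d)) = op (star u * u) from
      (map_mul _ _ _).symm, hu.1]
    exact map_one _
  · rw [show star (op u) = op (star u) from (map_star _ _).symm, show ((op u) * (op (star u)) :
      EuclideanSpace ℝ (Fin d) →L[ℝ] EuclideanSpace ℝ (Fin d)) = op (u * star u) from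
      (map_mul _ _ _).symm, hu.2]
    exact map_one _

lemma projDist_unitary {d : ℕ} {u : EuclideanSpace ℝ (Fin d) →L[ℝ] EuclideanSpace ℝ (Fin d)}
    (hu : u ∈ unitary (EuclideanSpace ℝ (Fin d) →L[ℝ] EuclideanSpace ℝ (Fin d)))
    (x y : EuclideanSpace ℝ (Fin d)) : projDist (u x) (u y) = projDist x y := by
  unfold projDist
  rw [u.norm_map_of_mem_unitary hu, u.norm_map_of_mem_unitary hu,
    u.inner_map_map_of_mem_unitary hu]

/-- Let `g ∈ SL(V)` with Cartan decomposition `g = k (diagonal a) l`, giving the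
top singular directions `X_g^M = ℝ (k e₁) ∈ P(V)` and `Y_g^m = ℝ (ᵗl e₁*) ∈ P(V*)`,
so that `δ(ℝx, Y_g^m) = |(l x)₁|/‖x‖`. Then for every `X = ℝx ∈ P(V)`:
`d(gX, X_g^M) · δ(X, Y_g^m) ≤ κ₂(g)/κ₁(g)`. -/
theorem stmt2 {d : ℕ} (hd : 2 ≤ d)
    (g k l : Matrix (Fin d) (Fin d) ℝ) (a : Fin d → ℝ)
    (hg : g.det = 1)
    (hk : k ∈ Matrix.orthogonalGroup (Fin d) ℝ)
    (hl : l ∈ Matrix.orthogonalGroup (Fin d) ℝ)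
    (hdecomp : g = k * Matrix.diagonal a * l)
    (hmono : ∀ i j : Fin d, i ≤ j → a j ≤ a i)
    (hpos : ∀ i, 0 ≤ a i)
    (x : EuclideanSpace ℝ (Fin d)) (hx : x ≠ 0) :
    projDist (op g x) (op k (EuclideanSpace.single ⟨0, by omega⟩ 1)) *
        (|op l x ⟨0, by omega⟩| / ‖x‖)
      ≤ a ⟨1, by omega⟩ / a ⟨0, by omega⟩ := by
  set i0 : Fin d := ⟨0, by omega⟩ with hi0
  set i1 : Fin d := ⟨1, by omega⟩ with hi1
  set y : EuclideanSpace ℝ (Fin d) := op l x with hy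
  set z : EuclideanSpace ℝ (Fin d) := op (Matrix.diagonal a) y with hzdef
  -- a i0 > 0
  have hprod : ∏ i, a i ≠ 0 := by
    intro h
    have hdet : g.det = 0 := by
      rw [hdecomp, Matrix.det_mul, Matrix.det_mul, Matrix.det_diagonal, h, mul_zero, zero_mul]
    rw [hg] at hdet; norm_num at hdet
  have ha0 : 0 < a i0 :=
    (hpos i0).lt_of_ne fun h => hprod (Finset.prod_eq_zero (Finset.mem_univ i0) h.symm)
  have ha1 : 0 ≤ a i1 := hpos i1
  -- decompose g
  have hgx : op g x = op k z := by
    rw [hdecomp]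
    show Matrix.toEuclideanCLM (𝕜 := ℝ) _ x = _
    rw [map_mul, map_mul]
    rfl
  have hnormxy : ‖x‖ = ‖y‖ :=
    ((op l).norm_map_of_mem_unitary (op_unitary hl) x).symm
  have hprojeq : projDist (op g x) (op k (EuclideanSpace.single i0 1)) =
      projDist z (EuclideanSpace.single i0 1) := by
    rw [hgx]; exact projDist_unitary (op_unitary hk) z _
  -- coordinates of z
  have hz : ∀ i, z i = a i * y i := by
    intro i
    rw [hzdef, op_apply, Matrix.mulVec_diagonal]
  -- norm squares
  have hnormz : ‖z‖ ^ 2 = ∑ i, (a i * y i) ^ 2 := by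
    rw [EuclideanSpace.norm_eq, Real.sq_sqrt (by positivity)]
    exact Finset.sum_congr rfl fun i _ => by rw [hz i, Real.norm_eq_abs, sq_abs]
  have hnormy : ‖y‖ ^ 2 = ∑ i, (y i) ^ 2 := by
    rw [EuclideanSpace.norm_eq, Real.sq_sqrt (by positivity)]
    exact Finset.sum_congr rfl fun i _ => by rw [Real.norm_eq_abs, sq_abs]
  -- key sum inequalities
  have hsub : ‖z‖ ^ 2 - (a i0 * y i0) ^ 2 = ∑ i ∈ Finset.univ.erase i0, (a i * y i) ^ 2 := by
    rw [hnormz, ← Finset.add_sum_erase _ _ (Finset.mem_univ i0)]; ring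
  have hA : ‖z‖ ^ 2 - (a i0 * y i0) ^ 2 ≤ (a i1) ^ 2 * ‖y‖ ^ 2 := by
    rw [hsub]
    calc ∑ i ∈ Finset.univ.erase i0, (a i * y i) ^ 2
        ≤ ∑ i ∈ Finset.univ.erase i0, (a i1) ^ 2 * (y i) ^ 2 := by
          refine Finset.sum_le_sum fun i hi => ?_
          have hne : i ≠ i0 := Finset.ne_of_mem_erase hi
          have h1i : i1 ≤ i := by
            rw [Fin.le_def]
            have : (i : ℕ) ≠ 0 := fun h => hne (Fin.ext (by simpa [hi0] using h))
            simp only [hi1]; omega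
          have : a i ≤ a i1 := hmono i1 i h1i
          have h2 : (a i) ^ 2 ≤ (a i1) ^ 2 := pow_le_pow_left₀ (hpos i) this 2
          calc (a i * y i) ^ 2 = (a i) ^ 2 * (y i) ^ 2 := by ring
            _ ≤ (a i1) ^ 2 * (y i) ^ 2 := mul_le_mul_of_nonneg_right h2 (sq_nonneg _)
      _ = (a i1) ^ 2 * ∑ i ∈ Finset.univ.erase i0, (y i) ^ 2 := by
          rw [Finset.mul_sum]
      _ ≤ (a i1) ^ 2 * ‖y‖ ^ 2 := by
          rw [hnormy]
          exact mul_le_mul_of_nonneg_left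
            (Finset.sum_le_sum_of_subset_of_nonneg (Finset.erase_subset _ _)
              (fun i _ _ => sq_nonneg _)) (sq_nonneg _)
  have hB : (a i0 * y i0) ^ 2 ≤ ‖z‖ ^ 2 := by
    rw [hnormz]
    exact Finset.single_le_sum (f := fun i => (a i * y i) ^ 2)
      (fun i _ => sq_nonneg _) (Finset.mem_univ i0)
  have hC : a i0 * |y i0| ≤ ‖z‖ := by
    have := Real.sqrt_le_sqrt hB
    rwa [Real.sqrt_sq_eq_abs, Real.sqrt_sq (norm_nonneg z), abs_mul,
      abs_of_pos ha0] at this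
  -- compute projDist z e
  have he : projDist z (EuclideanSpace.single i0 1) =
      Real.sqrt (‖z‖ ^ 2 - (a i0 * y i0) ^ 2) / ‖z‖ := by
    unfold projDist
    rw [EuclideanSpace.inner_single_right, EuclideanSpace.norm_single]
    simp [hz i0]
  rw [hprojeq, he, hnormxy]
  rcases eq_or_ne (y i0) 0 with hy0 | hy0
  · rw [hy0]
    simp only [abs_zero, zero_div, mul_zero]
    positivity
  · have hy0' : 0 < |y i0| := abs_pos.mpr hy0
    have hzpos : 0 < ‖z‖ := lt_of_lt_of_le (by positivity) hC
    have hypos : 0 < ‖y‖ := by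
      refine norm_pos_iff.mpr fun h => hy0 ?_
      rw [h]; rfl
    have h1 : Real.sqrt (‖z‖ ^ 2 - (a i0 * y i0) ^ 2) ≤ a i1 * ‖y‖ := by
      have := Real.sqrt_le_sqrt hA
      rwa [show (a i1) ^ 2 * ‖y‖ ^ 2 = (a i1 * ‖y‖) ^ 2 by ring,
        Real.sqrt_sq (by positivity)] at this
    rw [div_mul_div_comm, div_le_div_iff₀ (by positivity) ha0]
    have hkey := mul_le_mul h1 hC (by positivity) (by positivity)
    nlinarith [Real.sqrt_nonneg (‖z‖ ^ 2 - (a i0 * y i0) ^ 2)]
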